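/- Let E be a real inner product space, 0 < ε < ε', and let κ be the smoothed controller κ(x) = κ₀(x) − max(0, φ(x)) · min(0, ⟪g(x), κ₀(x)⟫) · g(x) with φ(x) = min(1, (ε' − b(x))/(ε' − ε)). Assume b : E → ℝ is differentiable at every point with gradient g(x) at x, that ‖g(x)‖ = 1 for every x with b(x) ≤ ε, and that κ₀ : E → E is arbitrary. Then the practical free space {x : b(x) ≥ ε} is positively invariant: for every differentiable curve x : ℝ → E satisfying x'(t) = κ(x(t)) for all t ≥ 0 and b(x(0)) ≥ ε, one has b(x(t)) ≥ ε for all t ≥ 0. -/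

import Mathlib

open scoped RealInnerProductSpace

/-- Safety (Theorem 1). Suppose `b` is differentiable with gradient
`g(x)` at every `x`, `‖g(x)‖ = 1` wherever `b(x) ≤ ε`, and `κ` is the smoothed
controller. Then the practical free space `{x : b x ≥ ε}` is positively
invariant for `ẋ = κ(x)`. -/
theorem safety_positive_invariance
    {E : Type*} [NormedAddCommGroup E] [InnerProductSpace ℝ E] [CompleteSpace E]
    (ε ε' : ℝ) (hε : 0 < ε) (hεε' : ε < ε')
    (b : E → ℝ) (g κ₀ : E → E)
    (hb : ∀ x, HasGradientAt b (g x) x)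
    (hg : ∀ x, b x ≤ ε → ‖g x‖ = 1)
    (φ : E → ℝ) (hφ : ∀ x, φ x = min 1 ((ε' - b x) / (ε' - ε)))
    (κ : E → E)
    (hκ : ∀ x, κ x = κ₀ x - (max 0 (φ x) * min 0 ⟪g x, κ₀ x⟫) • g x)
    (x : ℝ → E)
    (hx : ∀ t ∈ Set.Ici (0 : ℝ), HasDerivAt x (κ (x t)) t)
    (hx0 : ε ≤ b (x 0)) :
    ∀ t ∈ Set.Ici (0 : ℝ), ε ≤ b (x t) := by
  -- the scalar function h(t) = b(x t)
  set h : ℝ → ℝ := fun t => b (x t) with hh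
  have hderiv : ∀ t ∈ Set.Ici (0 : ℝ),
      HasDerivAt h ⟪g (x t), κ (x t)⟫ t := by
    intro t ht
    have := ((hb (x t)).hasFDerivAt.comp_hasDerivAt t (hx t ht))
    simp at this; exact this
  -- derivative is nonnegative where h ≤ ε
  have hnn : ∀ t ∈ Set.Ici (0 : ℝ), h t ≤ ε → 0 ≤ ⟪g (x t), κ (x t)⟫ := by
    intro t ht hle
    set y := x t with hy
    have hgy : ‖g y‖ = 1 := hg y hle
    have hφy : φ y = 1 := by
      rw [hφ]
      have hpos : (0:ℝ) < ε' - ε := by linarith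
      have : (1:ℝ) ≤ (ε' - b y) / (ε' - ε) := by
        rw [le_div_iff₀ hpos]; simp only [hh] at hle; linarith
      simp [min_eq_left this]
    rw [hκ y, inner_sub_right, inner_smul_right, real_inner_self_eq_norm_sq, hgy, hφy]
    have : max (0:ℝ) 1 = 1 := by norm_num
    rw [this]
    rcases le_or_gt (0:ℝ) ⟪g y, κ₀ y⟫ with hc | hc
    · rw [min_eq_left hc]; simpa using hc
    · rw [min_eq_right hc.le]; ring_nf; positivity
  -- main argument
  intro t₀ ht₀
  by_contra hcon
  push_neg at hcon
  have ht₀0 : (0:ℝ) ≤ t₀ := ht₀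
  have hcontOn : ContinuousOn h (Set.Icc 0 t₀) := fun t ht =>
    ((hderiv t ht.1).continuousAt).continuousWithinAt
  -- the set of times ≤ t₀ where safety holds
  set S : Set ℝ := Set.Icc 0 t₀ ∩ h ⁻¹' Set.Ici ε with hS
  have hSne : S.Nonempty := ⟨0, ⟨le_refl 0, ht₀0⟩, hx0⟩
  have hSclosed : IsClosed S :=
    hcontOn.preimage_isClosed_of_isClosed isClosed_Icc isClosed_Ici
  have hScpt : IsCompact S :=
    (isCompact_Icc).of_isClosed_subset hSclosed (Set.inter_subset_left)
  set s := sSup S with hs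
  have hsmem : s ∈ S := hScpt.sSup_mem hSne
  have hs0 : 0 ≤ s := hsmem.1.1
  have hst₀ : s ≤ t₀ := hsmem.1.2
  have hhs : ε ≤ h s := hsmem.2
  have hslt : s < t₀ := lt_of_le_of_ne hst₀ (by intro heq; rw [heq] at hhs; linarith)
  -- for t ∈ (s, t₀], h t < ε
  have hlt : ∀ t ∈ Set.Ioc s t₀, h t < ε := by
    intro t ht
    by_contra hge
    push_neg at hge
    have : t ∈ S := ⟨⟨hs0.trans ht.1.le, ht.2⟩, hge⟩
    exact absurd (le_csSup hScpt.bddAbove this) (not_le.mpr ht.1)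
  -- h is monotone on [s, t₀]
  have hmono : MonotoneOn h (Set.Icc s t₀) := by
    apply monotoneOn_of_deriv_nonneg (convex_Icc s t₀)
    · exact hcontOn.mono (Set.Icc_subset_Icc hs0 le_rfl)
    · intro t ht
      rw [interior_Icc] at ht
      exact ((hderiv t (Set.mem_Ici.mpr (hs0.trans ht.1.le))).differentiableAt).differentiableWithinAt
    · intro t ht
      rw [interior_Icc] at ht
      have ht' : t ∈ Set.Ici (0:ℝ) := hs0.trans ht.1.le
      rw [(hderiv t ht').deriv]
      exact hnn t ht' (hlt t ⟨ht.1, ht.2.le⟩).le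
  have : h s ≤ h t₀ := hmono (Set.left_mem_Icc.mpr hst₀) (Set.right_mem_Icc.mpr hst₀) hst₀
  linarith
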